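/- Fix α ∈ (0,1), ρ ∈ (-1,1), and define g_α(x) = Φ̄⁻¹(Φ̄(x)/α). Then the region R_α^{+,1} := {(u₁,u₂) : u₁ ≥ Φ̄⁻¹(α/2), -g_α(u₁)(1+ρ) + ρu₁ ≤ u₂ ≤ g_α(u₁)(1-ρ) + ρu₁} is closed under both diagonal translations: if (u₁,u₂) ∈ R_α^{+,1} and r > 0, then (u₁+r, u₂+r) ∈ R_α^{+,1} and (u₁+r, u₂-r) ∈ R_α^{+,1}. -/

import Mathlib

open MeasureTheory Real Set

/-- Standard normal density. -/
noncomputable def phi (x : ℝ) : ℝ := (Real.sqrt (2 * Real.pi))⁻¹ * Real.exp (-x ^ 2 / 2)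

/-- Upper tail of the standard normal distribution. -/
noncomputable def Phibar (x : ℝ) : ℝ := ∫ t in Set.Ioi x, phi t

/-- Inverse of the upper tail function `Φ̄ : ℝ → (0,1)`. -/
noncomputable def PhibarInv : ℝ → ℝ := Function.invFun Phibar

/-- The function `h_α`. -/
noncomputable def halpha (α ℓ : ℝ) : ℝ := PhibarInv (α * Phibar ℓ) - ℓ

/-- The function `g_α(u) := Φ̄⁻¹(Φ̄(u)/α)`. -/
noncomputable def galpha (α u : ℝ) : ℝ := PhibarInv (Phibar u / α)

/-- The region `R_α^{+,1}` of the two-dimensional rejection region. -/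
def RegionP1 (α ρ : ℝ) : Set (ℝ × ℝ) :=
  {u : ℝ × ℝ | PhibarInv (α / 2) ≤ u.1 ∧
    -galpha α u.1 * (1 + ρ) + ρ * u.1 ≤ u.2 ∧ u.2 ≤ galpha α u.1 * (1 - ρ) + ρ * u.1}



section Aux
open Filter

lemma phi_pos (x : ℝ) : 0 < phi x := by
  apply mul_pos (inv_pos.2 (Real.sqrt_pos.2 (by positivity))) (Real.exp_pos _)

lemma continuous_phi : Continuous phi := by
  unfold phi; fun_prop

lemma phi_eq (x : ℝ) : phi x = (Real.sqrt (2 * Real.pi))⁻¹ * Real.exp (-(1/2) * x ^ 2) := by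
  unfold phi; ring_nf

lemma integrable_phi : Integrable phi := by
  have := (integrable_exp_neg_mul_sq (by norm_num : (0:ℝ) < 1/2)).const_mul
    ((Real.sqrt (2 * Real.pi))⁻¹)
  have heq : phi = fun x => (Real.sqrt (2 * Real.pi))⁻¹ * Real.exp (-(1/2) * x ^ 2) := by
    funext x; exact phi_eq x
  rw [heq]; exact this

lemma integral_phi : ∫ x, phi x = 1 := by
  simp only [phi_eq]
  rw [integral_const_mul, integral_gaussian]
  rw [show π / (1/2 : ℝ) = 2 * π by ring]
  rw [inv_mul_cancel₀ (Real.sqrt_ne_zero'.2 (by positivity))]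

lemma setIntegral_phi_pos {s : Set ℝ} (hs : MeasurableSet s) (h : 0 < volume s) :
    0 < ∫ t in s, phi t := by
  rw [setIntegral_pos_iff_support_of_nonneg_ae
    (ae_of_all _ (fun x => (phi_pos x).le)) (integrable_phi.integrableOn)]
  have : Function.support phi = univ := by
    ext x; simp [Function.support, (phi_pos x).ne']
  rw [this, univ_inter]; exact h

lemma Phibar_pos (x : ℝ) : 0 < Phibar x :=
  setIntegral_phi_pos measurableSet_Ioi (by simp)

lemma Phibar_add_Iic (x : ℝ) : (∫ t in Iic x, phi t) + Phibar x = 1 := by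
  rw [Phibar, intervalIntegral.integral_Iic_add_Ioi integrable_phi.integrableOn integrable_phi.integrableOn,
    integral_phi]

lemma Phibar_lt_one (x : ℝ) : Phibar x < 1 := by
  have h1 := Phibar_add_Iic x
  have h2 : 0 < ∫ t in Iic x, phi t :=
    setIntegral_phi_pos measurableSet_Iic (by simp)
  linarith

lemma Phibar_sub (a x : ℝ) : Phibar x = Phibar a - ∫ t in a..x, phi t := by
  rcases le_total a x with h | h
  · rw [intervalIntegral.integral_of_le h]
    have : Ioc a x ∪ Ioi x = Ioi a := Ioc_union_Ioi_eq_Ioi h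
    have hsplit : (∫ t in Ioc a x, phi t) + ∫ t in Ioi x, phi t = ∫ t in Ioi a, phi t := by
      rw [← setIntegral_union (by simp [Set.disjoint_left]) measurableSet_Ioi
        integrable_phi.integrableOn integrable_phi.integrableOn, this]
    simp only [Phibar]; linarith
  · rw [intervalIntegral.integral_of_ge h]
    have : Ioc x a ∪ Ioi a = Ioi x := Ioc_union_Ioi_eq_Ioi h
    have hsplit : (∫ t in Ioc x a, phi t) + ∫ t in Ioi a, phi t = ∫ t in Ioi x, phi t := by
      rw [← setIntegral_union (by simp [Set.disjoint_left]) measurableSet_Ioi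
        integrable_phi.integrableOn integrable_phi.integrableOn, this]
    simp only [Phibar]; linarith

lemma strictAnti_Phibar : StrictAnti Phibar := by
  intro x y hxy
  rw [Phibar_sub x y]
  have : 0 < ∫ t in x..y, phi t := by
    apply intervalIntegral.intervalIntegral_pos_of_pos_on
      (continuous_phi.intervalIntegrable x y) (fun t _ => phi_pos t) hxy
  linarith

lemma hasDerivAt_Phibar (x : ℝ) : HasDerivAt Phibar (-phi x) x := by
  have : Phibar = fun y => Phibar 0 - ∫ t in (0:ℝ)..y, phi t := by
    funext y; exact Phibar_sub 0 y
  rw [this]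
  have h := intervalIntegral.integral_hasDerivAt_right
    (continuous_phi.intervalIntegrable 0 x)
    (continuous_phi.stronglyMeasurableAtFilter _ _)
    continuous_phi.continuousAt
  simpa using (h.const_sub (Phibar 0))

lemma continuous_Phibar : Continuous Phibar :=
  continuous_iff_continuousAt.2 fun x => (hasDerivAt_Phibar x).continuousAt

lemma tendsto_Phibar_atTop : Tendsto Phibar atTop (nhds 0) := by
  have h := intervalIntegral_tendsto_integral_Ioi 0 (integrable_phi.integrableOn) tendsto_id
  have : Tendsto (fun x => Phibar 0 - ∫ t in (0:ℝ)..x, phi t) atTop (nhds (Phibar 0 - Phibar 0)) :=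
    tendsto_const_nhds.sub h
  simp only [sub_self] at this
  exact this.congr fun x => (Phibar_sub 0 x).symm

lemma tendsto_Phibar_atBot : Tendsto Phibar atBot (nhds 1) := by
  have h := intervalIntegral_tendsto_integral_Iic 0 (integrable_phi.integrableOn (s := Iic 0)) tendsto_id
  have h2 : Tendsto (fun x : ℝ => ∫ t in x..0, phi t) atBot (nhds (∫ t in Iic 0, phi t)) := h
  have h3 : Tendsto (fun x : ℝ => Phibar 0 + ∫ t in x..0, phi t) atBot
      (nhds (Phibar 0 + ∫ t in Iic 0, phi t)) := tendsto_const_nhds.add h2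
  have he : (Phibar 0 + ∫ t in Iic 0, phi t) = 1 := by
    have := Phibar_add_Iic 0; linarith
  rw [he] at h3
  apply h3.congr
  intro x
  have := Phibar_sub 0 x
  have h4 : (∫ t in x..0, phi t) = - ∫ t in (0:ℝ)..x, phi t :=
    (intervalIntegral.integral_symm 0 x)
  linarith

lemma Phibar_surj {y : ℝ} (hy : y ∈ Ioo (0:ℝ) 1) : ∃ x, Phibar x = y := by
  obtain ⟨b, hb⟩ := (tendsto_Phibar_atTop.eventually (eventually_lt_nhds hy.1)).exists
  obtain ⟨a, ha⟩ := (tendsto_Phibar_atBot.eventually (eventually_gt_nhds hy.2)).exists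
  have hab : a ≤ b := by
    by_contra hc
    push_neg at hc
    have := strictAnti_Phibar hc
    linarith
  have : y ∈ Icc (Phibar b) (Phibar a) := ⟨hb.le, ha.le⟩
  obtain ⟨x, _, hx⟩ := intermediate_value_Icc' hab continuous_Phibar.continuousOn this
  exact ⟨x, hx⟩

lemma PhibarInv_Phibar (x : ℝ) : PhibarInv (Phibar x) = x :=
  Function.leftInverse_invFun strictAnti_Phibar.injective x

lemma Phibar_PhibarInv {y : ℝ} (hy : y ∈ Ioo (0:ℝ) 1) : Phibar (PhibarInv y) = y :=
  Function.invFun_eq (Phibar_surj hy)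

lemma PhibarInv_le_PhibarInv {y z : ℝ} (hy : y ∈ Ioo (0:ℝ) 1) (hz : z ∈ Ioo (0:ℝ) 1)
    (h : y ≤ z) : PhibarInv z ≤ PhibarInv y := by
  by_contra hc
  push_neg at hc
  have := strictAnti_Phibar hc
  rw [Phibar_PhibarInv hy, Phibar_PhibarInv hz] at this
  linarith

lemma hasDerivAt_phi (x : ℝ) : HasDerivAt phi (-(x * phi x)) x := by
  have h1 : HasDerivAt (fun t : ℝ => -t ^ 2 / 2) (-x) x := by
    have := ((hasDerivAt_pow 2 x).neg).div_const 2
    simpa using this.congr_deriv (by ring)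
  have h2 := (h1.exp).const_mul (Real.sqrt (2 * Real.pi))⁻¹
  have : phi = fun t => (Real.sqrt (2 * Real.pi))⁻¹ * Real.exp (-t ^ 2 / 2) := rfl
  rw [this]
  exact h2.congr_deriv (by beta_reduce; ring)

/-- The key inequality `x * Φ̄(x) ≤ φ(x)`. -/
lemma mul_Phibar_le_phi (x : ℝ) : x * Phibar x ≤ phi x := by
  rcases le_or_gt x 0 with hx | hx
  · have : x * Phibar x ≤ 0 := mul_nonpos_of_nonpos_of_nonneg hx (Phibar_pos x).le
    linarith [phi_pos x]
  · -- ∫_{Ioi x} t * phi t = phi x via FTC on -phi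
    have hint : ∫ t in Ioi x, t * phi t = 0 - (-phi x) := by
      apply integral_Ioi_of_hasDerivAt_of_nonneg'
        (g := fun t => -phi t) (g' := fun t => t * phi t)
      · intro t _
        exact (hasDerivAt_phi t).neg.congr_deriv (neg_neg _)
      · intro t ht
        exact mul_nonneg (le_of_lt (lt_trans hx ht)) (phi_pos t).le
      · -- Tendsto (fun t => -phi t) atTop (nhds 0)
        rw [show (0:ℝ) = -0 by norm_num]
        apply Tendsto.neg
        have : phi = fun t => (Real.sqrt (2 * Real.pi))⁻¹ * Real.exp (-t ^ 2 / 2) := rfl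
        rw [this]
        rw [show (0:ℝ) = (Real.sqrt (2 * Real.pi))⁻¹ * 0 by ring]
        apply Tendsto.const_mul
        apply Real.tendsto_exp_atBot.comp
        have h1 : Tendsto (fun t : ℝ => t ^ 2) atTop atTop := tendsto_pow_atTop (by norm_num)
        have h2 : Tendsto (fun t : ℝ => t ^ 2 / 2) atTop atTop := h1.atTop_div_const (by norm_num)
        have h3 := tendsto_neg_atTop_atBot.comp h2
        apply h3.congr
        intro t; simp; ring
    have hge : x * Phibar x ≤ ∫ t in Ioi x, t * phi t := by
      rw [Phibar, ← integral_const_mul]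
      apply setIntegral_mono_on
      · exact (integrable_phi.const_mul x).integrableOn
      · exact integrableOn_Ioi_deriv_of_nonneg' (g := fun t => -phi t) (l := 0)
          (fun t _ => by exact (hasDerivAt_phi t).neg.congr_deriv (neg_neg _))
          (fun t ht => mul_nonneg (le_of_lt (lt_trans hx ht)) (phi_pos t).le)
          (by
            rw [show (0:ℝ) = -0 by norm_num]
            apply Tendsto.neg
            have hphi : phi = fun t => (Real.sqrt (2 * Real.pi))⁻¹ * Real.exp (-t ^ 2 / 2) := rfl
            rw [hphi, show (0:ℝ) = (Real.sqrt (2 * Real.pi))⁻¹ * 0 by ring]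
            apply Tendsto.const_mul
            apply Real.tendsto_exp_atBot.comp
            have h1 : Tendsto (fun t : ℝ => t ^ 2) atTop atTop := tendsto_pow_atTop (by norm_num)
            have h2 : Tendsto (fun t : ℝ => t ^ 2 / 2) atTop atTop := h1.atTop_div_const (by norm_num)
            have h3 := tendsto_neg_atTop_atBot.comp h2
            apply h3.congr
            intro t; simp; ring)
      · exact measurableSet_Ioi
      · intro t ht
        exact mul_le_mul_of_nonneg_right (le_of_lt ht) (phi_pos t).le
    simp only [zero_sub, neg_neg] at hint
    linarith

/-- The hazard rate `φ/Φ̄` is monotone. -/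
lemma hazard_mono : Monotone (fun x => phi x / Phibar x) := by
  have hderiv : ∀ x : ℝ, HasDerivAt (fun x => phi x / Phibar x)
      ((-(x * phi x) * Phibar x - phi x * (-phi x)) / Phibar x ^ 2) x := by
    intro x
    exact (hasDerivAt_phi x).div (hasDerivAt_Phibar x) (Phibar_pos x).ne'
  apply monotone_of_deriv_nonneg
  · exact fun x => ((hderiv x).differentiableAt)
  · intro x
    rw [(hderiv x).deriv]
    apply div_nonneg _ (sq_nonneg _)
    have h1 := mul_Phibar_le_phi x
    have h2 := (phi_pos x).le
    have h3 := (Phibar_pos x).le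
    nlinarith

/-- The log-tail-ratio is antitone. -/
lemma log_ratio_anti (r : ℝ) (hr : 0 ≤ r) :
    Antitone (fun x => Real.log (Phibar (x + r)) - Real.log (Phibar x)) := by
  have hderiv : ∀ x : ℝ, HasDerivAt (fun x => Real.log (Phibar (x + r)) - Real.log (Phibar x))
      (-phi (x + r) / Phibar (x + r) - -phi x / Phibar x) x := by
    intro x
    have h1 : HasDerivAt (fun x : ℝ => Phibar (x + r)) (-phi (x + r)) x := by
      have := (hasDerivAt_Phibar (x + r)).comp x
        ((hasDerivAt_id x).add_const r)
      exact this.congr_deriv (by ring)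
    exact (h1.log (Phibar_pos _).ne').sub ((hasDerivAt_Phibar x).log (Phibar_pos x).ne')
  apply antitone_of_deriv_nonpos
  · exact fun x => ((hderiv x).differentiableAt)
  · intro x
    rw [(hderiv x).deriv]
    have := hazard_mono (le_add_of_nonneg_right hr : x ≤ x + r)
    simp only at this
    have h1 := Phibar_pos x
    have h2 := Phibar_pos (x + r)
    rw [neg_div, neg_div]
    linarith

/-- Lemma 6: super-additivity of `g_α`. -/
lemma galpha_superadd {α u r : ℝ} (hα0 : 0 < α) (hα1 : α < 1)
    (hu : Phibar u < α) (hr : 0 ≤ r) : galpha α u + r ≤ galpha α (u + r) := by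
  set g := galpha α u with hg
  have hmem : Phibar u / α ∈ Ioo (0:ℝ) 1 :=
    ⟨div_pos (Phibar_pos u) hα0, (div_lt_one hα0).2 hu⟩
  have hPg : Phibar g = Phibar u / α := Phibar_PhibarInv hmem
  have hgu : g ≤ u := by
    by_contra hc
    push_neg at hc
    have h2 := strictAnti_Phibar hc
    rw [hPg] at h2
    have : Phibar u / α ≥ Phibar u := by
      rw [ge_iff_le, le_div_iff₀ hα0]
      nlinarith [Phibar_pos u]
    linarith
  -- product inequality from antitonicity of the log ratio
  have hlog := log_ratio_anti r hr hgu
  simp only at hlog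
  have h1 := Phibar_pos g
  have h2 := Phibar_pos u
  have h3 := Phibar_pos (g + r)
  have h4 := Phibar_pos (u + r)
  -- Φ̄(g+r) * Φ̄(u) ≥ Φ̄(u+r) * Φ̄(g)
  have hprod : Phibar (u + r) * Phibar g ≤ Phibar (g + r) * Phibar u := by
    have hlog2 : Real.log (Phibar (u + r)) + Real.log (Phibar g) ≤
        Real.log (Phibar (g + r)) + Real.log (Phibar u) := by linarith
    have := Real.exp_le_exp.2 hlog2
    rw [Real.exp_add, Real.exp_add, Real.exp_log h4, Real.exp_log h1,
      Real.exp_log h3, Real.exp_log h2] at this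
    exact this
  -- hence Φ̄(u+r)/α ≤ Φ̄(g+r)
  have hkey : Phibar (u + r) / α ≤ Phibar (g + r) := by
    rw [div_le_iff₀ hα0]
    rw [hPg] at hprod
    have hαpos := hα0
    calc Phibar (u + r) = (Phibar (u + r) * (Phibar u / α)) * (α / Phibar u) := by
          field_simp
      _ ≤ (Phibar (g + r) * Phibar u) * (α / Phibar u) := by
          apply mul_le_mul_of_nonneg_right hprod (by positivity)
      _ = Phibar (g + r) * α := by field_simp
  have hmem2 : Phibar (u + r) / α ∈ Ioo (0:ℝ) 1 := by
    constructor
    · exact div_pos h4 hα0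
    · rw [div_lt_one hα0]
      calc Phibar (u + r) ≤ Phibar u := strictAnti_Phibar.antitone (le_add_of_nonneg_right hr)
        _ < α := hu
  have hmem3 : Phibar (g + r) ∈ Ioo (0:ℝ) 1 := ⟨h3, Phibar_lt_one _⟩
  have := PhibarInv_le_PhibarInv hmem2 hmem3 hkey
  rw [PhibarInv_Phibar] at this
  unfold galpha
  linarith

end Aux

/-- `R_α^{+,1}` is closed under both diagonal translations `(r, r)` and `(r, -r)` for `r > 0`. -/
theorem regionP1_diagonal_stable {α ρ : ℝ} (hα : α ∈ Set.Ioo (0 : ℝ) 1)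
    (hρ : ρ ∈ Set.Ioo (-1 : ℝ) 1) {u : ℝ × ℝ} (hu : u ∈ RegionP1 α ρ) {r : ℝ} (hr : 0 < r) :
    (u.1 + r, u.2 + r) ∈ RegionP1 α ρ ∧ (u.1 + r, u.2 - r) ∈ RegionP1 α ρ := by
  obtain ⟨hα0, hα1⟩ := hα
  obtain ⟨hρ1, hρ2⟩ := hρ
  obtain ⟨h1, h2, h3⟩ := hu
  have hhalf : α / 2 ∈ Ioo (0:ℝ) 1 := ⟨by linarith, by linarith⟩
  have hPu : Phibar u.1 < α := by
    have := strictAnti_Phibar.antitone h1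
    rw [Phibar_PhibarInv hhalf] at this
    linarith
  have hsup := galpha_superadd hα0 hα1 hPu hr.le
  set g := galpha α u.1
  set g' := galpha α (u.1 + r)
  have hfst : PhibarInv (α / 2) ≤ u.1 + r := by linarith
  refine ⟨⟨hfst, ?_, ?_⟩, ⟨hfst, ?_, ?_⟩⟩ <;> simp only <;> nlinarith
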